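/- Hypergeometric-type tail bound with adaptive lower-bounded success probability: consider an urn with n balls of which pn are black, and draw k ≤ n balls without replacement; let X be the number of black balls drawn. Then for every 0 < δ < 1, Pr(X < (1−δ)pk − p) < k·exp(−δ²pk/2). -/

import Mathlib

open Real Finset
open scoped ENNReal

/-- Two-variable AM-GM with natural exponents (x^m · y ≤ AM^(m+1)). -/
lemma young_aux (m : ℕ) {x y : ℝ} (hx : 0 ≤ x) (hy : 0 ≤ y) :
    x ^ m * y ≤ (((m : ℝ) * x + y) / (m + 1)) ^ (m + 1) := by
  have hm1 : (0:ℝ) < (m:ℝ) + 1 := by positivity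
  have hw₁0 : (0:ℝ) ≤ (m : ℝ) / ((m:ℝ) + 1) := by positivity
  have hw₂0 : (0:ℝ) ≤ 1 / ((m:ℝ) + 1) := by positivity
  have hsum : (m : ℝ) / ((m:ℝ) + 1) + 1 / ((m:ℝ) + 1) = 1 := by field_simp
  have hgm := Real.geom_mean_le_arith_mean2_weighted hw₁0 hw₂0 hx hy hsum
  have hgnn : 0 ≤ x ^ ((m : ℝ) / ((m:ℝ) + 1)) * y ^ (1 / ((m:ℝ) + 1)) := by positivity
  have hpow := pow_le_pow_left₀ hgnn hgm (m + 1)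
  calc x ^ m * y
      = (x ^ ((m : ℝ) / ((m:ℝ) + 1)) * y ^ (1 / ((m:ℝ) + 1))) ^ (m+1) := by
        rw [mul_pow, ← Real.rpow_natCast (x ^ ((m : ℝ) / ((m:ℝ) + 1))) (m+1),
          ← Real.rpow_natCast (y ^ (1 / ((m:ℝ) + 1))) (m+1),
          ← Real.rpow_mul hx, ← Real.rpow_mul hy]
        have e1 : (m : ℝ) / ((m:ℝ) + 1) * ((m+1 : ℕ) : ℝ) = (m:ℝ) := by
          push_cast; field_simp
        have e2 : 1 / ((m:ℝ) + 1) * ((m+1 : ℕ) : ℝ) = 1 := by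
          push_cast; field_simp
        rw [e1, e2, Real.rpow_one, Real.rpow_natCast]
    _ ≤ ((m : ℝ) / ((m:ℝ) + 1) * x + 1 / ((m:ℝ) + 1) * y) ^ (m+1) := hpow
    _ = (((m : ℝ) * x + y) / (m + 1)) ^ (m + 1) := by
        congr 1; field_simp

set_option maxHeartbeats 1600000 in
/-- The key induction-step inequality. -/
lemma step_ineq (p w d : ℝ) (m : ℕ) (hp0 : 0 ≤ p) (hp1 : p ≤ 1)
    (hw0 : 0 ≤ w) (hw1 : w ≤ 1) (hd0 : 0 ≤ d) (hdm : (m : ℝ) * d ≤ w)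
    (hu : 0 ≤ 1 - p * w - p * d) :
    (1 - p) * (1 - p * w - p * d) ^ m + p * (1 - w) * (1 - p * w + (1 - p) * d) ^ m
      ≤ (1 - p * w) ^ (m + 1) := by
  rcases Nat.eq_zero_or_pos m with hm | hm
  · subst hm; simp; nlinarith
  have hmR : (1:ℝ) ≤ (m:ℝ) := by exact_mod_cast hm
  have hmR0 : (0:ℝ) < (m:ℝ) := by linarith
  set c : ℝ := 1 - p * w with hc
  have hpw : p * w ≤ 1 := by nlinarith
  have hc0 : 0 ≤ c := by rw [hc]; linarith
  have hz0 : 0 ≤ 1 - w := by linarith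
  rcases eq_or_lt_of_le hp0 with hp | hp
  · -- p = 0
    have hc1 : c = 1 := by rw [hc, ← hp]; ring
    rw [← hp, hc1]; simp
  rcases eq_or_lt_of_le hd0 with hd | hd
  · -- d = 0
    rw [← hd]
    have h1 : (1 : ℝ) - p * w - p * 0 = c := by rw [hc]; ring
    have h2 : (1 : ℝ) - p * w + (1 - p) * 0 = c := by rw [hc]; ring
    rw [h1, h2, pow_succ]
    nlinarith [pow_nonneg hc0 m]
  set D : ℝ := min (w / m) (c / p) with hDdef
  have hdD : d ≤ D := by
    apply le_min
    · rw [le_div_iff₀ hmR0]; linarith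
    · rw [le_div_iff₀ hp]; nlinarith
  have hD0 : 0 < D := lt_of_lt_of_le hd hdD
  set l : ℝ := d / D with hl
  have hl0 : 0 ≤ l := by positivity
  have hl1 : l ≤ 1 := by rw [hl, div_le_one hD0]; exact hdD
  have hlD : l * D = d := div_mul_cancel₀ d (ne_of_gt hD0)
  have huD : 0 ≤ c - p * D := by
    have h : D ≤ c / p := min_le_right _ _
    rw [le_div_iff₀ hp] at h; linarith
  have hvD : 0 ≤ c + (1 - p) * D := by nlinarith
  have conv1 : (1 - p * w - p * d) ^ m ≤ (1 - l) * c ^ m + l * (c - p * D) ^ m := by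
    have h := (convexOn_pow (𝕜 := ℝ) m).2 (Set.mem_Ici.2 hc0) (Set.mem_Ici.2 huD)
      (by linarith : (0:ℝ) ≤ 1 - l) hl0 (by ring)
    simp only [smul_eq_mul] at h
    have e : (1 - l) * c + l * (c - p * D) = 1 - p * w - p * d := by
      linear_combination hc - p * hlD
    rwa [e] at h
  have conv2 : (1 - p * w + (1 - p) * d) ^ m ≤ (1 - l) * c ^ m + l * (c + (1 - p) * D) ^ m := by
    have h := (convexOn_pow (𝕜 := ℝ) m).2 (Set.mem_Ici.2 hc0) (Set.mem_Ici.2 hvD)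
      (by linarith : (0:ℝ) ≤ 1 - l) hl0 (by ring)
    simp only [smul_eq_mul] at h
    have e : (1 - l) * c + l * (c + (1 - p) * D) = 1 - p * w + (1 - p) * d := by
      linear_combination hc + (1 - p) * hlD
    rwa [e] at h
  have hDbound : (1 - p) * (c - p * D) ^ m + p * (1 - w) * (c + (1 - p) * D) ^ m
      ≤ c ^ (m + 1) := by
    rcases min_cases (w / (m:ℝ)) (c / p) with ⟨h1, h2⟩ | ⟨h1, h2⟩
    · -- D = w/m
      have hDval : D = w / m := hDdef.trans h1
      have hA1 : (c - p * D) ^ m * 1 ≤ c ^ (m+1) := by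
        have h := young_aux m (x := c - p * D) (y := 1) huD zero_le_one
        have e : ((m:ℝ) * (c - p * D) + 1) / ((m:ℝ) + 1) = c := by
          rw [hDval, hc]; field_simp; ring
        rwa [e] at h
      have hA2 : (c + (1 - p) * D) ^ m * (1 - w) ≤ c ^ (m+1) := by
        have h := young_aux m (x := c + (1 - p) * D) (y := 1 - w) hvD hz0
        have e : ((m:ℝ) * (c + (1 - p) * D) + (1 - w)) / ((m:ℝ) + 1) = c := by
          rw [hDval, hc]; field_simp; ring
        rwa [e] at h
      nlinarith [hA1, hA2]
    · -- D = c/p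
      have hDval : D = c / p := hDdef.trans h1
      have hzero : c - p * D = 0 := by rw [hDval]; field_simp; ring
      have hvDval : c + (1 - p) * D = c / p := by rw [hDval]; field_simp; ring
      rw [hzero, hvDval, zero_pow (by omega : m ≠ 0), mul_zero, zero_add]
      -- goal: p * (1 - w) * (c / p) ^ m ≤ c ^ (m+1)
      have hwlow : (m:ℝ) * c ≤ p * w := by
        have h : c / p ≤ w / m := h2.le
        rw [div_le_div_iff₀ hp hmR0] at h; linarith
      have hw' : (m:ℝ) ≤ ((m:ℝ) + 1) * (p * w) := by
        rw [hc] at hwlow; nlinarith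
      have hbern : 1 + (m:ℝ) * (p - 1) ≤ p ^ m := by
        have h := one_add_mul_le_pow (by linarith : (-2:ℝ) ≤ p - 1) m
        rwa [show (1:ℝ) + (p - 1) = p by ring] at h
      have hpm1 : p ^ m ≤ 1 := pow_le_one₀ hp0 hp1
      have hkey : p * (1 - w) ≤ p ^ m * c := by
        have hKpos : (0:ℝ) < (m:ℝ) + 1 := by linarith
        have hfinal : 0 ≤ ((m:ℝ) + 1) * (p ^ m * c - p * (1 - w)) := by
          have expand : ((m:ℝ) + 1) * (p ^ m * c - p * (1 - w))
              = ((m:ℝ) + 1) * p ^ m - ((m:ℝ) + 1) * p + (((m:ℝ) + 1) * (p * w)) * (1 - p ^ m)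
                - ((m:ℝ) + 1) * p ^ m * (p * w) + ((m:ℝ) + 1) * (p*w) * p ^ m := by
            rw [hc]; ring
          have hmono : (m:ℝ) * (1 - p ^ m) ≤ (((m:ℝ) + 1) * (p * w)) * (1 - p ^ m) :=
            mul_le_mul_of_nonneg_right hw' (by linarith)
          rw [expand]; nlinarith [hbern]
        have hX := (mul_nonneg_iff_of_pos_left hKpos).mp hfinal
        linarith
      have hppos : 0 < p ^ m := pow_pos hp m
      rw [div_pow]
      have hre : p * (1 - w) * (c ^ m / p ^ m) = p * (1 - w) * c ^ m / p ^ m := by ring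
      rw [hre, div_le_iff₀ hppos]
      calc p * (1 - w) * c ^ m ≤ (p ^ m * c) * c ^ m :=
            mul_le_mul_of_nonneg_right hkey (pow_nonneg hc0 m)
        _ = c ^ (m+1) * p ^ m := by rw [pow_succ]; ring
  have hfin : (1 - p) * (1 - p * w - p * d) ^ m + p * (1 - w) * (1 - p * w + (1 - p) * d) ^ m
      ≤ (1 - l) * c ^ (m+1)
        + l * ((1 - p) * (c - p * D) ^ m + p * (1 - w) * (c + (1 - p) * D) ^ m) := by
    have t1 := mul_le_mul_of_nonneg_left conv1 (by linarith : (0:ℝ) ≤ 1 - p)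
    have t2 := mul_le_mul_of_nonneg_left conv2 (by positivity : (0:ℝ) ≤ p * (1 - w))
    have e : (1 - p) * ((1 - l) * c ^ m + l * (c - p * D) ^ m)
        + p * (1 - w) * ((1 - l) * c ^ m + l * (c + (1 - p) * D) ^ m)
        = (1 - l) * c ^ (m+1)
          + l * ((1 - p) * (c - p * D) ^ m + p * (1 - w) * (c + (1 - p) * D) ^ m) := by
      rw [pow_succ, hc]; ring
    linarith [t1, t2, e.le, e.ge]
  have hlast := mul_le_mul_of_nonneg_left hDbound hl0
  linarith [hfin, hlast]

/-- Effective black set after conditioning on first draw `x`. -/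
def Bnext {n : ℕ} (B : Finset (Fin (n+1))) (x : Fin (n+1)) : Finset (Fin n) :=
  Finset.univ.filter (fun y : Fin n => (Equiv.swap 0 x) y.succ ∈ B)

lemma count_decompose (n k' : ℕ) (hk : k' + 1 ≤ n + 1) (hk' : k' ≤ n)
    (B : Finset (Fin (n+1))) (x : Fin (n+1)) (p : Equiv.Perm (Fin n)) :
    (Finset.univ.filter fun i : Fin (k'+1) =>
        (Equiv.Perm.decomposeFin.symm (x, p)) (Fin.castLE hk i) ∈ B).card
      = (if x ∈ B then 1 else 0)
        + (Finset.univ.filter fun i : Fin k' => p (Fin.castLE hk' i) ∈ Bnext B x).card := by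
  rw [Finset.card_filter, Finset.card_filter, Fin.sum_univ_succ]
  congr 1
  · have h0 : Fin.castLE hk (0 : Fin (k'+1)) = 0 := rfl
    rw [h0, Equiv.Perm.decomposeFin_symm_apply_zero]
  · apply Finset.sum_congr rfl
    intro i _
    have hsucc : Fin.castLE hk i.succ = (Fin.castLE hk' i).succ := by
      ext; simp
    rw [hsucc, Equiv.Perm.decomposeFin_symm_apply_succ]
    simp [Bnext]

lemma card_Bnext (n : ℕ) (B : Finset (Fin (n+1))) (x : Fin (n+1)) :
    ((Bnext B x).card : ℝ) = (B.card : ℝ) - (if x ∈ B then 1 else 0) := by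
  have hinj : Function.Injective (fun y : Fin n => (Equiv.swap 0 x) y.succ) := by
    intro a b hab
    exact Fin.succ_injective _ ((Equiv.swap 0 x).injective hab)
  have himg : Finset.univ.image (fun y : Fin n => (Equiv.swap 0 x) y.succ)
      = (Finset.univ : Finset (Fin (n+1))).erase x := by
    apply Finset.eq_of_subset_of_card_le
    · intro w hw
      rw [Finset.mem_image] at hw
      obtain ⟨y, _, rfl⟩ := hw
      rw [Finset.mem_erase]
      refine ⟨?_, Finset.mem_univ _⟩
      intro hcon
      apply Fin.succ_ne_zero y
      apply (Equiv.swap 0 x).injective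
      rw [hcon, Equiv.swap_apply_left]
    · rw [Finset.card_erase_of_mem (Finset.mem_univ x),
        Finset.card_image_of_injective _ hinj]
      simp
  have hfilter : ((Finset.univ.filter
        fun y : Fin n => (Equiv.swap 0 x) y.succ ∈ B).image
        (fun y : Fin n => (Equiv.swap 0 x) y.succ))
      = ((Finset.univ : Finset (Fin (n+1))).erase x).filter (· ∈ B) := by
    rw [← himg, Finset.filter_image]
  have herase : ((Finset.univ : Finset (Fin (n+1))).erase x).filter (· ∈ B)
      = B.erase x := by
    ext w; simp [Finset.mem_erase, and_comm]
  have hcard : (Bnext B x).card = (B.erase x).card := by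
    rw [Bnext, ← Finset.card_image_of_injective _ hinj, hfilter, herase]
  rw [hcard]
  by_cases hx : x ∈ B
  · rw [Finset.card_erase_of_mem hx, if_pos hx,
      Nat.cast_sub (Finset.card_pos.mpr ⟨x, hx⟩)]
    simp
  · rw [Finset.erase_eq_of_notMem hx, if_neg hx]
    simp

/-- MGF bound for the count of black balls in the first k draws. -/
lemma mgf_bound (n : ℕ) : ∀ (z : ℝ), 0 ≤ z → z ≤ 1 → ∀ (k : ℕ) (hk : k ≤ n) (B : Finset (Fin n)),
    (∑ σ : Equiv.Perm (Fin n),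
        z ^ (Finset.univ.filter fun i : Fin k => σ (Fin.castLE hk i) ∈ B).card)
      ≤ (n.factorial : ℝ) * (1 - (1 - z) * B.card / n) ^ k := by
  induction n with
  | zero =>
    intro z hz0 hz1 k hk B
    have hk0 : k = 0 := Nat.le_zero.mp hk
    subst hk0
    simp
  | succ n IH =>
    intro z hz0 hz1 k hk B
    rcases k with _ | k'
    · simp [Fintype.card_perm]
    have hk' : k' ≤ n := Nat.succ_le_succ_iff.mp hk
    have hMn : B.card ≤ n + 1 := le_trans (Finset.card_le_univ B) (by simp)
    set w : ℝ := 1 - z with hw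
    set M : ℕ := B.card with hM
    -- reindex the sum over permutations
    have hreindex : (∑ σ : Equiv.Perm (Fin (n+1)),
          z ^ (Finset.univ.filter fun i : Fin (k'+1) => σ (Fin.castLE hk i) ∈ B).card)
        = ∑ x : Fin (n+1), ∑ p : Equiv.Perm (Fin n),
            (if x ∈ B then z else 1)
              * z ^ (Finset.univ.filter fun i : Fin k' =>
                  p (Fin.castLE hk' i) ∈ Bnext B x).card := by
      rw [← Equiv.sum_comp (Equiv.Perm.decomposeFin.symm)
        (fun σ : Equiv.Perm (Fin (n+1)) =>
          z ^ (Finset.univ.filter fun i : Fin (k'+1) => σ (Fin.castLE hk i) ∈ B).card),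
        Fintype.sum_prod_type]
      apply Finset.sum_congr rfl
      intro x _
      apply Finset.sum_congr rfl
      intro p _
      rw [count_decompose n k' hk hk' B x p, pow_add]
      congr 1
      split_ifs <;> simp
    rw [hreindex]
    -- bound the inner sums by the IH
    have hinner : ∀ x : Fin (n+1),
        (∑ p : Equiv.Perm (Fin n),
            (if x ∈ B then z else 1)
              * z ^ (Finset.univ.filter fun i : Fin k' =>
                  p (Fin.castLE hk' i) ∈ Bnext B x).card)
          ≤ (if x ∈ B then
              z * ((n.factorial : ℝ) * (1 - w * ((M:ℝ) - 1) / n) ^ k')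
            else (n.factorial : ℝ) * (1 - w * (M:ℝ) / n) ^ k') := by
      intro x
      rw [← Finset.mul_sum]
      have hIH := IH z hz0 hz1 k' hk' (Bnext B x)
      have hcard := card_Bnext n B x
      by_cases hx : x ∈ B
      · rw [if_pos hx] at hcard ⊢
        rw [hcard] at hIH
        simp only [if_pos hx]
        apply mul_le_mul_of_nonneg_left _ hz0
        exact hIH
      · rw [if_neg hx] at hcard ⊢
        rw [hcard] at hIH
        simp only [if_neg hx, one_mul]
        rw [sub_zero] at hIH
        exact hIH
    calc (∑ x : Fin (n+1), ∑ p : Equiv.Perm (Fin n),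
            (if x ∈ B then z else 1)
              * z ^ (Finset.univ.filter fun i : Fin k' =>
                  p (Fin.castLE hk' i) ∈ Bnext B x).card)
        ≤ ∑ x : Fin (n+1), (if x ∈ B then
              z * ((n.factorial : ℝ) * (1 - w * ((M:ℝ) - 1) / n) ^ k')
            else (n.factorial : ℝ) * (1 - w * (M:ℝ) / n) ^ k') :=
          Finset.sum_le_sum (fun x _ => hinner x)
      _ = (M:ℝ) * (z * ((n.factorial : ℝ) * (1 - w * ((M:ℝ) - 1) / n) ^ k'))
            + ((n:ℝ) + 1 - M) * ((n.factorial : ℝ) * (1 - w * (M:ℝ) / n) ^ k') := by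
          rw [Finset.sum_ite]
          rw [Finset.sum_const, Finset.sum_const]
          have h1 : Finset.univ.filter (fun x => x ∈ B) = B := by
            ext y; simp
          have h2 : (Finset.univ.filter (fun x : Fin (n+1) => ¬ x ∈ B)).card = n + 1 - M := by
            have : Finset.univ.filter (fun x : Fin (n+1) => ¬ x ∈ B) = Bᶜ := by
              ext y; simp
            rw [this, Finset.card_compl]
            simp [hM]
          rw [h1, h2]
          simp only [nsmul_eq_mul]
          rw [Nat.cast_sub hMn]
          push_cast
          ring
      _ ≤ (((n+1).factorial : ℕ) : ℝ) * (1 - w * (M:ℝ) / (((n+1):ℕ):ℝ)) ^ (k'+1) := by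
          have hw0 : (0:ℝ) ≤ w := by rw [hw]; linarith
          have hw1 : w ≤ 1 := by rw [hw]; linarith
          have hzw : 1 - w = z := by rw [hw]; ring
          push_cast [Nat.factorial_succ]
          rcases Nat.eq_zero_or_pos n with hn | hn
          · subst hn
            have hk0 : k' = 0 := Nat.le_zero.mp hk'
            subst hk0
            have hM1 : (M:ℝ) ≤ 1 := by exact_mod_cast hMn
            simp only [pow_zero, Nat.cast_zero, Nat.factorial_zero, Nat.cast_one, pow_one]
            ring_nf
            nlinarith [hzw, hM1, Nat.cast_nonneg (α := ℝ) M]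
          have hn0 : (n:ℝ) ≠ 0 := by positivity
          have hnpos : (0:ℝ) < (n:ℝ) := by positivity
          have hF0 : (0:ℝ) ≤ (n.factorial : ℝ) := Nat.cast_nonneg _
          rcases Nat.lt_or_ge M (n+1) with hMlt | hMge
          · -- M ≤ n : use step_ineq
            have hMlen : (M:ℝ) ≤ (n:ℝ) := by
              have : M ≤ n := Nat.lt_succ_iff.mp hMlt
              exact_mod_cast this
            set P : ℝ := (M:ℝ) / ((n:ℝ)+1) with hP
            have hp0 : 0 ≤ P := by positivity
            have hp1 : P ≤ 1 := by
              rw [hP, div_le_one (by positivity)]; linarith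
            have hd0 : (0:ℝ) ≤ w / n := by positivity
            have hdm : (k' : ℝ) * (w / n) ≤ w := by
              have hkn : (k' : ℝ) ≤ (n:ℝ) := by exact_mod_cast hk'
              calc (k' : ℝ) * (w / n) = w * ((k':ℝ) / n) := by ring
                _ ≤ w * 1 := by
                    apply mul_le_mul_of_nonneg_left _ hw0
                    rw [div_le_one hnpos]; exact hkn
                _ = w := mul_one w
            have hA : 1 - P * w - P * (w / n) = 1 - w * (M:ℝ) / n := by
              rw [hP]; field_simp; ring
            have hB : 1 - P * w + (1 - P) * (w / n) = 1 - w * ((M:ℝ) - 1) / n := by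
              rw [hP]; field_simp; ring
            have hu : 0 ≤ 1 - P * w - P * (w / n) := by
              rw [hA]
              have : w * (M:ℝ) / n ≤ w := by
                rw [div_le_iff₀ hnpos]; nlinarith
              linarith
            have key := step_ineq P w (w / n) k' hp0 hp1 hw0 hw1 hd0 hdm hu
            rw [hA, hB, hzw] at key
            have hNp : ((n:ℝ) + 1) * P = (M:ℝ) := by rw [hP]; field_simp
            have hc : 1 - P * w = 1 - w * (M:ℝ) / ((n:ℝ) + 1) := by
              rw [hP]; field_simp
            rw [hc] at key
            have hmul := mul_le_mul_of_nonneg_left key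
              (by positivity : (0:ℝ) ≤ ((n:ℝ) + 1) * (n.factorial : ℝ))
            calc (M:ℝ) * (z * ((n.factorial:ℝ) * (1 - w * ((M:ℝ) - 1) / n) ^ k'))
                  + ((n:ℝ) + 1 - (M:ℝ)) * ((n.factorial:ℝ) * (1 - w * (M:ℝ) / n) ^ k')
                = ((n:ℝ) + 1) * (n.factorial:ℝ)
                    * ((1 - P) * (1 - w * (M:ℝ) / n) ^ k'
                      + P * z * (1 - w * ((M:ℝ) - 1) / n) ^ k') := by
                  linear_combination (((n.factorial:ℝ)) * ((1 - w * (M:ℝ) / n) ^ k')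
                    - ((n.factorial:ℝ)) * z * ((1 - w * ((M:ℝ) - 1) / n) ^ k')) * hNp
              _ ≤ ((n:ℝ) + 1) * (n.factorial:ℝ) * (1 - w * (M:ℝ) / ((n:ℝ) + 1)) ^ (k' + 1) := by
                  calc ((n:ℝ) + 1) * (n.factorial:ℝ)
                      * ((1 - P) * (1 - w * (M:ℝ) / n) ^ k'
                        + P * z * (1 - w * ((M:ℝ) - 1) / n) ^ k')
                      ≤ ((n:ℝ) + 1) * (n.factorial:ℝ) * (1 - w * (M:ℝ) / ((n:ℝ)+1)) ^ (k'+1) := hmul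
                    _ = ((n:ℝ) + 1) * (n.factorial:ℝ) * (1 - w * (M:ℝ) / ((n:ℝ) + 1)) ^ (k' + 1) := rfl
              _ = ((n:ℝ) + 1) * (n.factorial:ℝ) * (1 - w * (M:ℝ) / ((n:ℝ) + 1)) ^ (k' + 1) := rfl
          · -- M = n+1
            have hMeq : (M:ℝ) = (n:ℝ) + 1 := by
              have : M = n + 1 := le_antisymm hMn hMge
              rw [this]; push_cast; ring
            have e1 : 1 - w * ((M:ℝ) - 1) / n = z := by
              rw [hMeq, ← hzw]; field_simp; ring
            have e2 : 1 - w * (M:ℝ) / ((n:ℝ) + 1) = z := by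
              rw [hMeq, ← hzw]; field_simp
            rw [e1, e2, hMeq]
            have : ((n:ℝ) + 1 - ((n:ℝ) + 1)) = 0 := by ring
            rw [this, zero_mul, add_zero, pow_succ]
            exact le_of_eq (by ring)

/-- `(1-δ)·log(1-δ) ≥ -δ + δ²/2` for `0 < δ < 1`. -/
lemma log_ineq (δ : ℝ) (h0 : 0 < δ) (h1 : δ < 1) :
    -δ + δ ^ 2 / 2 ≤ (1 - δ) * Real.log (1 - δ) := by
  set t : ℝ := 1 - δ with ht
  have ht0 : 0 < t := by rw [ht]; linarith
  have ht1 : t < 1 := by rw [ht]; linarith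
  have hlt : Real.log t < 0 := Real.log_neg ht0 ht1
  set s : ℝ := -Real.log t with hs
  have hs0 : 0 ≤ s := by rw [hs]; linarith
  have hsinh : s ≤ Real.sinh s := Real.self_le_sinh_iff.mpr hs0
  rw [Real.sinh_eq] at hsinh
  have hexp1 : Real.exp s = t⁻¹ := by
    rw [hs, Real.exp_neg, Real.exp_log ht0]
  have hexp2 : Real.exp (-s) = t := by
    rw [hs, neg_neg, Real.exp_log ht0]
  rw [hexp1, hexp2] at hsinh
  have hmul := mul_le_mul_of_nonneg_left hsinh (le_of_lt ht0)
  have hinv : t * t⁻¹ = 1 := mul_inv_cancel₀ (ne_of_gt ht0)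
  have hts : t * Real.log t = -(t * s) := by rw [hs]; ring
  nlinarith [hmul, hinv, hts]

set_option maxHeartbeats 1600000 in
theorem hypergeometric_tail_bound
    (n k : ℕ) (hk : 0 < k) (hkn : k ≤ n)
    (p δ : ℝ) (hp0 : 0 < p) (hp1 : p < 1) (hδ0 : 0 < δ) (hδ1 : δ < 1)
    (B : Finset (Fin n)) (hB : (B.card : ℝ) = p * n) :
    ((PMF.uniformOfFintype (Equiv.Perm (Fin n))).toOuterMeasure
        {σ | ((Finset.univ.filter
                fun i : Fin k => σ (Fin.castLE hkn i) ∈ B).card : ℝ)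
              < (1 - δ) * p * k - p})
      < ENNReal.ofReal ((k : ℝ) * Real.exp (-(δ ^ 2) * p * k / 2)) := by
  classical
  have hn : 0 < n := lt_of_lt_of_le hk hkn
  have hnR : (0:ℝ) < n := by exact_mod_cast hn
  have hkR : (1:ℝ) ≤ k := by exact_mod_cast hk
  set z : ℝ := 1 - δ with hz
  have hz0 : 0 < z := by rw [hz]; linarith
  have hz1 : z ≤ 1 := by rw [hz]; linarith
  have hzlt1 : z < 1 := by rw [hz]; linarith
  set T : ℝ := (1 - δ) * p * k - p with hT
  set E : Set (Equiv.Perm (Fin n)) := {σ | ((Finset.univ.filter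
      fun i : Fin k => σ (Fin.castLE hkn i) ∈ B).card : ℝ) < T} with hE
  set bad : Finset (Equiv.Perm (Fin n)) := Finset.univ.filter (· ∈ E) with hbad
  have hfactpos : (0:ℝ) < (n.factorial : ℝ) := by exact_mod_cast n.factorial_pos
  -- measure computation
  have hmeas : (PMF.uniformOfFintype (Equiv.Perm (Fin n))).toOuterMeasure E
      = ENNReal.ofReal ((bad.card : ℝ) / (n.factorial : ℝ)) := by
    rw [PMF.toOuterMeasure_apply, tsum_fintype]
    have hterm : ∀ σ : Equiv.Perm (Fin n), E.indicator
        (⇑(PMF.uniformOfFintype (Equiv.Perm (Fin n)))) σ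
        = if σ ∈ E then (((n.factorial : ℕ) : ℝ≥0∞))⁻¹ else 0 := by
      intro σ
      rw [Set.indicator_apply]
      split_ifs
      · rw [PMF.uniformOfFintype_apply, Fintype.card_perm, Fintype.card_fin]
      · rfl
    rw [Finset.sum_congr rfl (fun σ _ => hterm σ), Finset.sum_ite,
      Finset.sum_const, Finset.sum_const_zero, add_zero, nsmul_eq_mul]
    rw [ENNReal.ofReal_div_of_pos hfactpos, ENNReal.ofReal_natCast,
      ENNReal.ofReal_natCast, div_eq_mul_inv]
  rw [hmeas]
  -- positivity of the target bound
  have hexppos : (0:ℝ) < Real.exp (-(δ ^ 2) * p * k / 2) := Real.exp_pos _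
  have hRpos : (0:ℝ) < (k : ℝ) * Real.exp (-(δ ^ 2) * p * k / 2) := by positivity
  rw [ENNReal.ofReal_lt_ofReal_iff hRpos]
  -- main real inequality
  have hzT : (0:ℝ) < z ^ T := Real.rpow_pos_of_pos hz0 T
  have hδp1 : δ * p < 1 := by nlinarith
  have hbase : (0:ℝ) < 1 - δ * p := by linarith
  have hmain : (bad.card : ℝ) * z ^ T ≤ (n.factorial : ℝ) * (1 - δ * p) ^ k := by
    have hstep1 : (bad.card : ℝ) * z ^ T
        ≤ ∑ σ ∈ bad, z ^ ((Finset.univ.filter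
            fun i : Fin k => σ (Fin.castLE hkn i) ∈ B).card) := by
      rw [← nsmul_eq_mul, ← Finset.sum_const]
      apply Finset.sum_le_sum
      intro σ hσ
      have hσE : σ ∈ E := (Finset.mem_filter.mp hσ).2
      have hXT : ((Finset.univ.filter
          fun i : Fin k => σ (Fin.castLE hkn i) ∈ B).card : ℝ) ≤ T := le_of_lt hσE
      calc z ^ T ≤ z ^ (((Finset.univ.filter
            fun i : Fin k => σ (Fin.castLE hkn i) ∈ B).card : ℕ) : ℝ) :=
            Real.rpow_le_rpow_of_exponent_ge hz0 hz1 hXT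
        _ = z ^ ((Finset.univ.filter
            fun i : Fin k => σ (Fin.castLE hkn i) ∈ B).card) :=
            Real.rpow_natCast z _
    have hstep2 : (∑ σ ∈ bad, z ^ ((Finset.univ.filter
            fun i : Fin k => σ (Fin.castLE hkn i) ∈ B).card))
        ≤ ∑ σ : Equiv.Perm (Fin n), z ^ ((Finset.univ.filter
            fun i : Fin k => σ (Fin.castLE hkn i) ∈ B).card) := by
      apply Finset.sum_le_sum_of_subset_of_nonneg (Finset.filter_subset _ _)
      intro σ _ _
      positivity
    have hstep3 := mgf_bound n z (le_of_lt hz0) hz1 k hkn B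
    have hrw : 1 - (1 - z) * (B.card : ℝ) / n = 1 - δ * p := by
      rw [hB, hz]
      field_simp
      ring
    rw [hrw] at hstep3
    linarith
  -- divide through
  have h1 : (bad.card : ℝ) / (n.factorial : ℝ) ≤ (1 - δ * p) ^ k / z ^ T := by
    rw [div_le_div_iff₀ hfactpos hzT]
    nlinarith [hmain]
  -- Chernoff-style log computation
  have hA : (1 - δ * p) ^ k / z ^ T ≤ Real.exp (-(δ ^ 2) * p * k / 2) * z ^ (p : ℝ) := by
    set L1 : ℝ := Real.log (1 - δ * p) with hL1
    set Lz : ℝ := Real.log z with hLz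
    have hlog : (k:ℝ) * L1 - T * Lz ≤ -(δ ^ 2) * p * k / 2 + p * Lz := by
      have hl1 : L1 ≤ -(δ * p) := by
        have := Real.log_le_sub_one_of_pos hbase
        rw [hL1]; linarith
      have hl2 : -δ + δ ^ 2 / 2 ≤ (1 - δ) * Lz := by
        have := log_ineq δ hδ0 hδ1
        rw [hLz, hz]; linarith
      have e1 : (k:ℝ) * L1 ≤ (k:ℝ) * (-(δ * p)) :=
        mul_le_mul_of_nonneg_left hl1 (by positivity)
      have e2 : (p * (k:ℝ)) * (-((1 - δ) * Lz)) ≤ (p * (k:ℝ)) * (δ - δ ^ 2 / 2) := by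
        apply mul_le_mul_of_nonneg_left _ (by positivity)
        linarith
      rw [hT]
      nlinarith [e1, e2]
    have hexp := Real.exp_le_exp.mpr hlog
    have hid1 : Real.exp ((k:ℝ) * L1 - T * Lz) = (1 - δ * p) ^ k / z ^ T := by
      rw [Real.exp_sub]
      congr 1
      · rw [Real.exp_nat_mul, hL1, Real.exp_log hbase]
      · rw [hLz, Real.rpow_def_of_pos hz0, mul_comm]
    have hid2 : Real.exp (-(δ ^ 2) * p * k / 2 + p * Lz)
        = Real.exp (-(δ ^ 2) * p * k / 2) * z ^ (p:ℝ) := by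
      rw [Real.exp_add]
      congr 1
      rw [hLz, Real.rpow_def_of_pos hz0, mul_comm]
    rw [hid1, hid2] at hexp
    exact hexp
  -- final chain
  have hzp1 : z ^ (p:ℝ) < 1 := Real.rpow_lt_one (le_of_lt hz0) hzlt1 hp0
  calc (bad.card : ℝ) / (n.factorial : ℝ) ≤ (1 - δ * p) ^ k / z ^ T := h1
    _ ≤ Real.exp (-(δ ^ 2) * p * k / 2) * z ^ (p:ℝ) := hA
    _ < Real.exp (-(δ ^ 2) * p * k / 2) * 1 := by
        exact mul_lt_mul_of_pos_left hzp1 hexppos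
    _ ≤ (k : ℝ) * Real.exp (-(δ ^ 2) * p * k / 2) := by nlinarith [hexppos]
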